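/- Under the elliptical unit-speed parametrization with direction angle φ, the angular velocity satisfies dφ/dt = (a²sin²φ + b²cos²φ)^{3/2}/(a²b²). -/

import Mathlib

open Real

/-- Under the elliptical unit-speed parametrization with direction angle `φ`,
the angular velocity satisfies `dφ/dt = (a²sin²φ + b²cos²φ)^{3/2}/(a²b²)`. -/
theorem ellipse_angular_velocity (a b : ℝ) (ha : 0 < a) (hb : 0 < b) (hab : a ≠ b)
    (X Y φ : ℝ → ℝ)
    (hX : Differentiable ℝ X) (hY : Differentiable ℝ Y) (hφ : Differentiable ℝ φ)
    (hmono : StrictMono φ)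
    (hXpos : ∀ t, X t = a ^ 2 * Real.sin (φ t) /
        Real.sqrt (a ^ 2 * Real.sin (φ t) ^ 2 + b ^ 2 * Real.cos (φ t) ^ 2))
    (hYpos : ∀ t, Y t = -(b ^ 2 * Real.cos (φ t)) /
        Real.sqrt (a ^ 2 * Real.sin (φ t) ^ 2 + b ^ 2 * Real.cos (φ t) ^ 2))
    (hXv : ∀ t, deriv X t = Real.cos (φ t))
    (hYv : ∀ t, deriv Y t = Real.sin (φ t)) :
    ∀ t, deriv φ t =
      (a ^ 2 * Real.sin (φ t) ^ 2 + b ^ 2 * Real.cos (φ t) ^ 2) ^ ((3 : ℝ) / 2)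
        / (a ^ 2 * b ^ 2) := by
  intro t
  set s := φ t with hs_def
  set p := deriv φ t with hp_def
  set D := a ^ 2 * Real.sin s ^ 2 + b ^ 2 * Real.cos s ^ 2 with hD_def
  have hsc := Real.sin_sq_add_cos_sq s
  have hD : 0 < D := by
    rcases le_total (a ^ 2) (b ^ 2) with h | h
    · nlinarith [sq_nonneg (Real.cos s), sq_nonneg (Real.sin s), pow_pos ha 2, pow_pos hb 2]
    · nlinarith [sq_nonneg (Real.cos s), sq_nonneg (Real.sin s), pow_pos ha 2, pow_pos hb 2]
  set q := Real.sqrt D with hq_def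
  have hq : 0 < q := Real.sqrt_pos.mpr hD
  have hq2 : q ^ 2 = D := Real.sq_sqrt hD.le
  have hφd : HasDerivAt φ p t := hφ.differentiableAt.hasDerivAt
  have hsin : HasDerivAt (fun u => Real.sin (φ u)) (Real.cos s * p) t :=
    (Real.hasDerivAt_sin s).comp t hφd
  have hcos : HasDerivAt (fun u => Real.cos (φ u)) (-Real.sin s * p) t :=
    (Real.hasDerivAt_cos s).comp t hφd
  have hDen : HasDerivAt
      (fun u => a ^ 2 * Real.sin (φ u) ^ 2 + b ^ 2 * Real.cos (φ u) ^ 2)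
      (a ^ 2 * (2 * Real.sin s * (Real.cos s * p)) +
        b ^ 2 * (2 * Real.cos s * (-Real.sin s * p))) t := by
    have h1 := ((hsin.pow 2).const_mul (a ^ 2)).add ((hcos.pow 2).const_mul (b ^ 2))
    refine h1.congr_deriv ?_
    rw [← hs_def]
    ring
  have hsqrt : HasDerivAt
      (fun u => Real.sqrt (a ^ 2 * Real.sin (φ u) ^ 2 + b ^ 2 * Real.cos (φ u) ^ 2))
      ((a ^ 2 * (2 * Real.sin s * (Real.cos s * p)) +
        b ^ 2 * (2 * Real.cos s * (-Real.sin s * p))) / (2 * q)) t := by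
    exact hDen.sqrt (by simpa [← hD_def] using hD.ne')
  have hXD : HasDerivAt
      (fun u => a ^ 2 * Real.sin (φ u) /
        Real.sqrt (a ^ 2 * Real.sin (φ u) ^ 2 + b ^ 2 * Real.cos (φ u) ^ 2))
      ((a ^ 2 * (Real.cos s * p) * q - a ^ 2 * Real.sin s *
        ((a ^ 2 * (2 * Real.sin s * (Real.cos s * p)) +
          b ^ 2 * (2 * Real.cos s * (-Real.sin s * p))) / (2 * q))) / q ^ 2) t :=
    (hsin.const_mul (a ^ 2)).div hsqrt hq.ne'
  have hYD : HasDerivAt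
      (fun u => -(b ^ 2 * Real.cos (φ u)) /
        Real.sqrt (a ^ 2 * Real.sin (φ u) ^ 2 + b ^ 2 * Real.cos (φ u) ^ 2))
      ((-(b ^ 2 * (-Real.sin s * p)) * q - -(b ^ 2 * Real.cos s) *
        ((a ^ 2 * (2 * Real.sin s * (Real.cos s * p)) +
          b ^ 2 * (2 * Real.cos s * (-Real.sin s * p))) / (2 * q))) / q ^ 2) t :=
    ((hcos.const_mul (b ^ 2)).neg.div hsqrt hq.ne')
  have hXfun : X = fun u => a ^ 2 * Real.sin (φ u) /
      Real.sqrt (a ^ 2 * Real.sin (φ u) ^ 2 + b ^ 2 * Real.cos (φ u) ^ 2) := funext hXpos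
  have hYfun : Y = fun u => -(b ^ 2 * Real.cos (φ u)) /
      Real.sqrt (a ^ 2 * Real.sin (φ u) ^ 2 + b ^ 2 * Real.cos (φ u) ^ 2) := funext hYpos
  have eX : Real.cos s = (a ^ 2 * (Real.cos s * p) * q - a ^ 2 * Real.sin s *
        ((a ^ 2 * (2 * Real.sin s * (Real.cos s * p)) +
          b ^ 2 * (2 * Real.cos s * (-Real.sin s * p))) / (2 * q))) / q ^ 2 := by
    have h1 : deriv X t = (a ^ 2 * (Real.cos s * p) * q - a ^ 2 * Real.sin s *
        ((a ^ 2 * (2 * Real.sin s * (Real.cos s * p)) +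
          b ^ 2 * (2 * Real.cos s * (-Real.sin s * p))) / (2 * q))) / q ^ 2 := by
      rw [hXfun]; exact hXD.deriv
    rw [← h1, hXv t]
  have eY : Real.sin s = (-(b ^ 2 * (-Real.sin s * p)) * q - -(b ^ 2 * Real.cos s) *
        ((a ^ 2 * (2 * Real.sin s * (Real.cos s * p)) +
          b ^ 2 * (2 * Real.cos s * (-Real.sin s * p))) / (2 * q))) / q ^ 2 := by
    have h1 : deriv Y t = (-(b ^ 2 * (-Real.sin s * p)) * q - -(b ^ 2 * Real.cos s) *
        ((a ^ 2 * (2 * Real.sin s * (Real.cos s * p)) +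
          b ^ 2 * (2 * Real.cos s * (-Real.sin s * p))) / (2 * q))) / q ^ 2 := by
      rw [hYfun]; exact hYD.deriv
    rw [← h1, hYv t]
  -- clear denominators
  have eX' : Real.cos s * (D * q) = a ^ 2 * b ^ 2 * Real.cos s * p := by
    field_simp at eX
    linear_combination eX + (a ^ 2 * Real.cos s * p - Real.cos s * q) * hq2 +
      (a ^ 2 * b ^ 2 * Real.cos s * p) * hsc + (a ^ 2 * Real.cos s * p) * hD_def
  have eY' : Real.sin s * (D * q) = a ^ 2 * b ^ 2 * Real.sin s * p := by
    field_simp at eY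
    linear_combination eY + (b ^ 2 * Real.sin s * p - Real.sin s * q) * hq2 +
      (a ^ 2 * b ^ 2 * Real.sin s * p) * hsc + (b ^ 2 * Real.sin s * p) * hD_def
  have key : D * q = a ^ 2 * b ^ 2 * p := by
    rcases eq_or_ne (Real.cos s) 0 with h | h
    · have hsin_ne : Real.sin s ≠ 0 := by
        intro h'; rw [h, h'] at hsc; norm_num at hsc
      exact mul_left_cancel₀ hsin_ne (by linear_combination eY')
    · exact mul_left_cancel₀ h (by linear_combination eX')
  have hrpow : D ^ ((3 : ℝ) / 2) = D * q := by
    rw [show (3 : ℝ) / 2 = 1 + 1 / 2 by norm_num, Real.rpow_add hD, Real.rpow_one,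
      hq_def, Real.sqrt_eq_rpow]
  rw [hrpow, key]
  exact (mul_div_cancel_left₀ p (by positivity)).symm
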